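/- Let a ≠ 0, H₀ ≠ 0, and suppose f₁(u₁) = c₄u₁ + c₅ with c₄ ≠ 0 and f₂ : ℝ → ℝ twice differentiable with f₂' nowhere zero. Then the constant mean curvature equation 2H₀(ac₄f₂ + f₁f₂')³ = 2ac₄f₂' + [c₄²f₂²f₂'' − 2c₄²(f₂')²f₂ + f₂'']·f₁ cannot hold identically in (u₁, u₂), since matching coefficients of powers of f₁ forces (f₂')³ = 0. -/

import Mathlib

noncomputable def wyy (w : ℝ → ℝ → ℝ) (y z : ℝ) : ℝ :=
  deriv (fun t => deriv (fun t' => w t' z) t) y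

noncomputable def wzz (w : ℝ → ℝ → ℝ) (y z : ℝ) : ℝ :=
  deriv (fun s => deriv (fun s' => w y s') s) z

noncomputable def wyz (w : ℝ → ℝ → ℝ) (y z : ℝ) : ℝ :=
  deriv (fun s => deriv (fun t => w t s) y) z

noncomputable def wy (w : ℝ → ℝ → ℝ) (y z : ℝ) : ℝ := deriv (fun t => w t z) y

noncomputable def wz (w : ℝ → ℝ → ℝ) (y z : ℝ) : ℝ := deriv (fun s => w y s) z

/-- Isotropic Gaussian curvature of the graph x = w(y,z). -/
noncomputable def K2 (w : ℝ → ℝ → ℝ) (y z : ℝ) : ℝ :=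
  (wyy w y z * wzz w y z - (wyz w y z)^2) / (wz w y z)^4

/-- Isotropic mean curvature of the graph x = w(y,z). -/
noncomputable def H2 (w : ℝ → ℝ → ℝ) (y z : ℝ) : ℝ :=
  ((wz w y z)^2 * wyy w y z - 2 * wy w y z * wz w y z * wyz w y z
    + (1 + (wy w y z)^2) * wzz w y z) / (2 * (wz w y z)^3)

noncomputable def D2 (f : ℝ → ℝ) : ℝ → ℝ := deriv (deriv f)

theorem stmt18 (a H₀ c₄ c₅ : ℝ) (f₁ f₂ : ℝ → ℝ)
    (hf₂ : ∀ t, DifferentiableAt ℝ f₂ t) (hf₂' : ∀ t, DifferentiableAt ℝ (deriv f₂) t)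
    (ha : a ≠ 0) (hH₀ : H₀ ≠ 0) (hc₄ : c₄ ≠ 0)
    (h₁ : ∀ t, f₁ t = c₄ * t + c₅)
    (h₂'0 : ∀ t, deriv f₂ t ≠ 0)
    (hH : ∀ u₁ u₂ : ℝ,
      2 * H₀ * (a * c₄ * f₂ u₂ + f₁ u₁ * deriv f₂ u₂)^3 =
        2 * a * c₄ * deriv f₂ u₂ +
        (c₄^2 * (f₂ u₂)^2 * D2 f₂ u₂ - 2 * c₄^2 * (deriv f₂ u₂)^2 * f₂ u₂
          + D2 f₂ u₂) * f₁ u₁) :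
    False := by
  have key : ∀ s : ℝ, 2 * H₀ * (a * c₄ * f₂ 0 + s * deriv f₂ 0)^3 =
      2 * a * c₄ * deriv f₂ 0 +
      (c₄^2 * (f₂ 0)^2 * D2 f₂ 0 - 2 * c₄^2 * (deriv f₂ 0)^2 * f₂ 0 + D2 f₂ 0) * s := by
    intro s
    have h := hH ((s - c₅) / c₄) 0
    have hf : f₁ ((s - c₅) / c₄) = s := by
      rw [h₁]; field_simp; ring
    rw [hf] at h
    exact h
  have e0 := key 0
  have e1 := key 1
  have e2 := key 2
  have e3 := key 3
  have hB := h₂'0 0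
  have : H₀ * (deriv f₂ 0)^3 = 0 := by nlinarith [e0, e1, e2, e3]
  rcases mul_eq_zero.mp this with h | h
  · exact hH₀ h
  · exact hB (pow_eq_zero_iff (by norm_num) |>.mp h)
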